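/- Let μ be a unit quaternion with real part μ₀ and imaginary coordinates μ₁, μ₂, μ₃, let λ > 1 be real, and set ν = ((λ⁴+1)/(λ(λ²+1)))·μ₀ − (λ+1/λ)·(μ₁i+μ₂j+μ₃k). If (λ⁴ + 1/λ⁴)·μ⁴ + ν⁴ is real, then μ₀·μ₁ = μ₀·μ₂ = μ₀·μ₃ = 0. -/

import Mathlib

open Quaternion

lemma aux4 (L a x s : ℝ) (hL : 1 < L) (hs : 0 ≤ s)
    (h : (L ^ 4 + 1 / L ^ 4) * (4 * a * (a ^ 2 - (x ^ 2 + s)) * x)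
        + 4 * ((L ^ 4 + 1) / (L * (L ^ 2 + 1)) * a) *
            (((L ^ 4 + 1) / (L * (L ^ 2 + 1)) * a) ^ 2 - (L + 1 / L) ^ 2 * (x ^ 2 + s)) *
            (-((L + 1 / L) * x)) = 0) :
    a * x = 0 := by
  have hL0 : (0:ℝ) < L := by linarith
  have h1 : L ≠ 0 := ne_of_gt hL0
  have h2 : L ^ 2 + 1 ≠ 0 := by positivity
  have key : (L ^ 8 * (L ^ 2 + 1) *
      (8 * (L ^ 4 + L ^ 2 + 1) * ((L ^ 2 - 1) ^ 2 * a ^ 2 + (L ^ 2 + 1) ^ 2 * (x ^ 2 + s))))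
      * (a * x) = 0 := by
    field_simp at h
    linear_combination (L ^ 6 * (L ^ 2 + 1)) * h
  rcases mul_eq_zero.mp key with h3 | h3
  · have hp : (0:ℝ) < L ^ 8 * (L ^ 2 + 1) := by positivity
    have hq : (0:ℝ) < 8 * (L ^ 4 + L ^ 2 + 1) := by positivity
    have hbr : (L ^ 2 - 1) ^ 2 * a ^ 2 + (L ^ 2 + 1) ^ 2 * (x ^ 2 + s) = 0 := by
      rcases mul_eq_zero.mp h3 with h4 | h4
      · exact absurd h4 (ne_of_gt hp)
      · rcases mul_eq_zero.mp h4 with h5 | h5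
        · exact absurd h5 (ne_of_gt hq)
        · exact h5
    have hL2 : (0:ℝ) < L ^ 2 - 1 := by nlinarith [mul_pos (sub_pos.mpr hL) (by linarith : (0:ℝ) < L + 1)]
    have hsq : (0:ℝ) < (L ^ 2 - 1) ^ 2 := by positivity
    have hnn : (0:ℝ) ≤ (L ^ 2 + 1) ^ 2 * (x ^ 2 + s) := by positivity
    have ha2 : a ^ 2 = 0 := by nlinarith [sq_nonneg a]
    have ha : a = 0 := by
      exact pow_eq_zero_iff (n := 2) (by norm_num) |>.mp ha2
    rw [ha, zero_mul]
  · exact h3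

theorem stmt4 (μ : ℍ[ℝ]) (hμ : ‖μ‖ = 1) (Λ : ℝ) (hΛ : 1 < Λ)
    (ν : ℍ[ℝ])
    (hν : ν = (((Λ ^ 4 + 1) / (Λ * (Λ ^ 2 + 1)) * μ.re : ℝ) : ℍ[ℝ])
            - ((Λ + 1 / Λ : ℝ) : ℍ[ℝ]) * (μ - ((μ.re : ℝ) : ℍ[ℝ])))
    (h : ∃ r : ℝ, ((Λ ^ 4 + 1 / Λ ^ 4 : ℝ) : ℍ[ℝ]) * μ ^ 4 + ν ^ 4 = (r : ℍ[ℝ])) :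
    μ.re * μ.imI = 0 ∧ μ.re * μ.imJ = 0 ∧ μ.re * μ.imK = 0 := by
  obtain ⟨r, hr⟩ := h
  subst hν
  have eI := congrArg QuaternionAlgebra.imI hr
  have eJ := congrArg QuaternionAlgebra.imJ hr
  have eK := congrArg QuaternionAlgebra.imK hr
  simp only [pow_succ, pow_zero, one_mul, Quaternion.imI_mul, Quaternion.re_mul,
    Quaternion.imJ_mul, Quaternion.imK_mul, Quaternion.imI_add, Quaternion.re_sub,
    Quaternion.imI_sub, Quaternion.imJ_sub, Quaternion.imK_sub, Quaternion.re_coe,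
    Quaternion.imI_coe, Quaternion.imJ_coe, Quaternion.imK_coe, Quaternion.re_add,
    Quaternion.imJ_add, Quaternion.imK_add] at eI eJ eK
  refine ⟨aux4 Λ μ.re μ.imI (μ.imJ ^ 2 + μ.imK ^ 2) hΛ (by positivity) (by linear_combination eI),
    aux4 Λ μ.re μ.imJ (μ.imI ^ 2 + μ.imK ^ 2) hΛ (by positivity) (by linear_combination eJ),
    aux4 Λ μ.re μ.imK (μ.imI ^ 2 + μ.imJ ^ 2) hΛ (by positivity) (by linear_combination eK)⟩
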